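/- There exists a constant C > 0 depending only on nothing (universal) such that the following holds. Let T₁, T₂ > 0 and 0 < α ≤ 1, let I ⊆ ℝ be an interval with |I| ≤ (T₁/T₂)^{1/α}, and let f be a real-valued function defined on a closed subset S ⊆ I. Suppose that for all distinct x, y, z ∈ S: |f(x) − f(y)| ≤ T₁·|x − y| and |(f(x) − f(y))/(x − y) − (f(y) − f(z))/(y − z)| ≤ T₂·(diam{x, y, z})^α. Then f admits an extension F : I → ℝ with ‖F′‖_∞ ≤ C·T₁ and ‖F′‖_α ≤ C·T₂. -/

import Mathlib

open Set Filter Topology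

private lemma rpow_R3 {α u h : ℝ} (hα : 0 < α) (hα1 : α ≤ 1) (hu : 0 ≤ u) (huh : u ≤ h) :
    h ^ α * (u / h) ≤ u ^ α := by
  rcases eq_or_lt_of_le hu with hu0 | hu0
  · rcases eq_or_lt_of_le (hu0 ▸ huh : (0:ℝ) ≤ h) with hh0 | hh0
    · simp [← hu0, ← hh0, Real.zero_rpow hα.ne']
    · simp [← hu0, Real.zero_rpow hα.ne']
  · have hh0 : 0 < h := lt_of_lt_of_le hu0 huh
    have h1 : u / h ≤ (u / h) ^ α := by
      have := Real.rpow_le_rpow_of_exponent_ge (div_pos hu0 hh0) (div_le_one_of_le₀ huh hh0.le) hα1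
      simpa using this
    calc h ^ α * (u / h) ≤ h ^ α * (u / h) ^ α := by
          exact mul_le_mul_of_nonneg_left h1 (Real.rpow_nonneg hh0.le α)
      _ = u ^ α := by
          rw [← Real.mul_rpow hh0.le (by positivity)]
          rw [mul_div_cancel₀ _ hh0.ne']

noncomputable def hermV (fp fq gp gq p q : ℝ) : ℝ → ℝ := fun x =>
  fp + gp * (x - p) + ((3 * ((fq - fp) / (q - p)) - 2 * gp - gq) / (q - p)) * (x - p) ^ 2
    + ((gp + gq - 2 * ((fq - fp) / (q - p))) / (q - p) ^ 2) * (x - p) ^ 3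

noncomputable def hermD (fp fq gp gq p q : ℝ) : ℝ → ℝ := fun x =>
  gp + (2 * (3 * ((fq - fp) / (q - p)) - 2 * gp - gq) / (q - p)) * (x - p)
    + (3 * (gp + gq - 2 * ((fq - fp) / (q - p))) / (q - p) ^ 2) * (x - p) ^ 2

lemma hermV_hasDeriv (fp fq gp gq p q x : ℝ) :
    HasDerivAt (hermV fp fq gp gq p q) (hermD fp fq gp gq p q x) x := by
  have h1 : HasDerivAt (fun y : ℝ => y - p) 1 x := (hasDerivAt_id x).sub_const p
  have h2 := h1.pow 2
  have h3 := h1.pow 3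
  have := (((hasDerivAt_const x fp).add (h1.const_mul gp)).add
      (h2.const_mul ((3 * ((fq - fp) / (q - p)) - 2 * gp - gq) / (q - p)))).add
      (h3.const_mul ((gp + gq - 2 * ((fq - fp) / (q - p))) / (q - p) ^ 2))
  refine this.congr_deriv ?_
  simp [hermD]
  ring

lemma hermV_left (fp fq gp gq p q : ℝ) : hermV fp fq gp gq p q p = fp := by
  simp [hermV]

section herm
variable {fp fq gp gq p q E x y : ℝ} (hpq : p < q)
  (h1 : |(fq - fp) / (q - p) - gp| ≤ E) (h2 : |(fq - fp) / (q - p) - gq| ≤ E)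
  (hx : x ∈ Icc p q) (hy : y ∈ Icc p q)

include hpq h1 h2 hx

lemma hermD_left : |hermD fp fq gp gq p q x - gp| ≤ 7 * E * ((x - p) / (q - p)) := by
  have hh : (0:ℝ) < q - p := sub_pos.2 hpq
  have hh' : q - p ≠ 0 := ne_of_gt hh
  have key : hermD fp fq gp gq p q x - gp =
      ((fq - fp) / (q - p) - gp) * (4 * ((x - p) / (q - p)) - 3 * ((x - p) / (q - p)) ^ 2)
      + ((fq - fp) / (q - p) - gq) * (2 * ((x - p) / (q - p)) - 3 * ((x - p) / (q - p)) ^ 2) := by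
    simp only [hermD]; field_simp; ring
  set t := (x - p) / (q - p) with ht
  have ht0 : 0 ≤ t := div_nonneg (by linarith [hx.1]) hh.le
  have ht1 : t ≤ 1 := div_le_one_of_le₀ (by linarith [hx.2]) hh.le
  have hE : 0 ≤ E := le_trans (abs_nonneg _) h1
  have b1 : |4 * t - 3 * t ^ 2| ≤ 4 * t := abs_le.mpr ⟨by nlinarith, by nlinarith⟩
  have b2 : |2 * t - 3 * t ^ 2| ≤ 3 * t := abs_le.mpr ⟨by nlinarith, by nlinarith⟩
  rw [key]
  calc |_ + _| ≤ |((fq - fp) / (q - p) - gp)| * |4 * t - 3 * t ^ 2|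
      + |((fq - fp) / (q - p) - gq)| * |2 * t - 3 * t ^ 2| := by
        rw [← abs_mul, ← abs_mul]; exact abs_add_le _ _
    _ ≤ E * (4 * t) + E * (3 * t) := by
        exact add_le_add (mul_le_mul h1 b1 (abs_nonneg _) hE) (mul_le_mul h2 b2 (abs_nonneg _) hE)
    _ = 7 * E * t := by ring

lemma hermD_right : |hermD fp fq gp gq p q x - gq| ≤ 6 * E * ((q - x) / (q - p)) := by
  have hh : (0:ℝ) < q - p := sub_pos.2 hpq
  have hh' : q - p ≠ 0 := ne_of_gt hh
  have key : hermD fp fq gp gq p q x - gq =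
      ((fq - fp) / (q - p) - gp) * ((3 * ((x - p) / (q - p)) - 1) * ((q - x) / (q - p)))
      + ((fq - fp) / (q - p) - gq) * ((3 * ((x - p) / (q - p)) + 1) * ((q - x) / (q - p))) := by
    simp only [hermD]; field_simp; ring
  set t := (x - p) / (q - p) with ht
  set u := (q - x) / (q - p) with hu
  have ht0 : 0 ≤ t := div_nonneg (by linarith [hx.1]) hh.le
  have ht1 : t ≤ 1 := div_le_one_of_le₀ (by linarith [hx.2]) hh.le
  have hu0 : 0 ≤ u := div_nonneg (by linarith [hx.2]) hh.le
  have hE : 0 ≤ E := le_trans (abs_nonneg _) h1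
  have b1 : |(3 * t - 1) * u| ≤ 2 * u := by
    rw [abs_mul, abs_of_nonneg hu0]
    have : |3 * t - 1| ≤ 2 := abs_le.mpr ⟨by nlinarith, by nlinarith⟩
    exact mul_le_mul_of_nonneg_right this hu0
  have b2 : |(3 * t + 1) * u| ≤ 4 * u := by
    rw [abs_mul, abs_of_nonneg hu0]
    have : |3 * t + 1| ≤ 4 := abs_le.mpr ⟨by nlinarith, by nlinarith⟩
    exact mul_le_mul_of_nonneg_right this hu0
  rw [key]
  calc |_ + _| ≤ |((fq - fp) / (q - p) - gp)| * |(3 * t - 1) * u|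
      + |((fq - fp) / (q - p) - gq)| * |(3 * t + 1) * u| := by
        rw [← abs_mul, ← abs_mul]; exact abs_add_le _ _
    _ ≤ E * (2 * u) + E * (4 * u) := by
        exact add_le_add (mul_le_mul h1 b1 (abs_nonneg _) hE) (mul_le_mul h2 b2 (abs_nonneg _) hE)
    _ = 6 * E * u := by ring

lemma hermV_taylor_left :
    |hermV fp fq gp gq p q x - fp - gp * (x - p)| ≤ 6 * E * (x - p) * ((x - p) / (q - p)) := by
  have hh : (0:ℝ) < q - p := sub_pos.2 hpq
  have hh' : q - p ≠ 0 := ne_of_gt hh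
  have key : hermV fp fq gp gq p q x - fp - gp * (x - p) =
      (x - p) * (((fq - fp) / (q - p) - gp) * (2 * ((x - p) / (q - p)) - ((x - p) / (q - p)) ^ 2)
        + ((fq - fp) / (q - p) - gq) * (((x - p) / (q - p)) - ((x - p) / (q - p)) ^ 2)) := by
    simp only [hermV]; field_simp; ring
  set t := (x - p) / (q - p) with ht
  have ht0 : 0 ≤ t := div_nonneg (by linarith [hx.1]) hh.le
  have ht1 : t ≤ 1 := div_le_one_of_le₀ (by linarith [hx.2]) hh.le
  have hE : 0 ≤ E := le_trans (abs_nonneg _) h1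
  have hxp : 0 ≤ x - p := by linarith [hx.1]
  have b1 : |2 * t - t ^ 2| ≤ 2 * t := abs_le.mpr ⟨by nlinarith, by nlinarith⟩
  have b2 : |t - t ^ 2| ≤ t := abs_le.mpr ⟨by nlinarith, by nlinarith⟩
  rw [key, abs_mul, abs_of_nonneg hxp]
  have hin : |((fq - fp) / (q - p) - gp) * (2 * t - t ^ 2)
      + ((fq - fp) / (q - p) - gq) * (t - t ^ 2)| ≤ 6 * E * t := by
    calc |_ + _| ≤ |((fq - fp) / (q - p) - gp)| * |2 * t - t ^ 2|
        + |((fq - fp) / (q - p) - gq)| * |t - t ^ 2| := by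
          rw [← abs_mul, ← abs_mul]; exact abs_add_le _ _
      _ ≤ E * (2 * t) + E * t :=
          add_le_add (mul_le_mul h1 b1 (abs_nonneg _) hE) (mul_le_mul h2 b2 (abs_nonneg _) hE)
      _ ≤ 6 * E * t := by nlinarith
  calc (x - p) * |_| ≤ (x - p) * (6 * E * t) := mul_le_mul_of_nonneg_left hin hxp
    _ = 6 * E * (x - p) * t := by ring

lemma hermV_taylor_right :
    |hermV fp fq gp gq p q x - fq - gq * (x - q)| ≤ 6 * E * (q - x) * ((q - x) / (q - p)) := by
  have hh : (0:ℝ) < q - p := sub_pos.2 hpq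
  have hh' : q - p ≠ 0 := ne_of_gt hh
  have key : hermV fp fq gp gq p q x - fq - gq * (x - q) =
      -((q - x) * (((fq - fp) / (q - p) - gp) * (((x - p) / (q - p)) * ((q - x) / (q - p)))
        + ((fq - fp) / (q - p) - gq) * ((1 + ((x - p) / (q - p))) * ((q - x) / (q - p))))) := by
    simp only [hermV]; field_simp; ring
  set t := (x - p) / (q - p) with ht
  set u := (q - x) / (q - p) with hu
  have ht0 : 0 ≤ t := div_nonneg (by linarith [hx.1]) hh.le
  have ht1 : t ≤ 1 := div_le_one_of_le₀ (by linarith [hx.2]) hh.le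
  have hu0 : 0 ≤ u := div_nonneg (by linarith [hx.2]) hh.le
  have hu1 : u ≤ 1 := div_le_one_of_le₀ (by linarith [hx.1]) hh.le
  have hE : 0 ≤ E := le_trans (abs_nonneg _) h1
  have hqx : 0 ≤ q - x := by linarith [hx.2]
  have b1 : |t * u| ≤ u := by
    rw [abs_mul, abs_of_nonneg ht0, abs_of_nonneg hu0]
    nlinarith
  have b2 : |(1 + t) * u| ≤ 2 * u := by
    rw [abs_mul, abs_of_nonneg (by linarith : (0:ℝ) ≤ 1 + t), abs_of_nonneg hu0]
    nlinarith
  rw [key, abs_neg, abs_mul, abs_of_nonneg hqx]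
  have hin : |((fq - fp) / (q - p) - gp) * (t * u)
      + ((fq - fp) / (q - p) - gq) * ((1 + t) * u)| ≤ 6 * E * u := by
    calc |_ + _| ≤ |((fq - fp) / (q - p) - gp)| * |t * u|
        + |((fq - fp) / (q - p) - gq)| * |(1 + t) * u| := by
          rw [← abs_mul, ← abs_mul]; exact abs_add_le _ _
      _ ≤ E * u + E * (2 * u) :=
          add_le_add (mul_le_mul h1 b1 (abs_nonneg _) hE) (mul_le_mul h2 b2 (abs_nonneg _) hE)
      _ ≤ 6 * E * u := by nlinarith
  calc (q - x) * |_| ≤ (q - x) * (6 * E * u) := mul_le_mul_of_nonneg_left hin hqx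
    _ = 6 * E * (q - x) * u := by ring

include hy in
lemma hermD_holder :
    |hermD fp fq gp gq p q x - hermD fp fq gp gq p q y| ≤ 8 * E * (|x - y| / (q - p)) := by
  have hh : (0:ℝ) < q - p := sub_pos.2 hpq
  have hh' : q - p ≠ 0 := ne_of_gt hh
  have key : hermD fp fq gp gq p q x - hermD fp fq gp gq p q y =
      ((fq - fp) / (q - p) - gp) * ((4 - 3 * ((x - p) / (q - p) + (y - p) / (q - p)))
        * ((x - y) / (q - p)))
      + ((fq - fp) / (q - p) - gq) * ((2 - 3 * ((x - p) / (q - p) + (y - p) / (q - p)))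
        * ((x - y) / (q - p))) := by
    simp only [hermD]; field_simp; ring
  set t := (x - p) / (q - p) with ht
  set s := (y - p) / (q - p) with hs
  have ht0 : 0 ≤ t := div_nonneg (by linarith [hx.1]) hh.le
  have ht1 : t ≤ 1 := div_le_one_of_le₀ (by linarith [hx.2]) hh.le
  have hs0 : 0 ≤ s := div_nonneg (by linarith [hy.1]) hh.le
  have hs1 : s ≤ 1 := div_le_one_of_le₀ (by linarith [hy.2]) hh.le
  have hE : 0 ≤ E := le_trans (abs_nonneg _) h1
  have hw : |(x - y) / (q - p)| = |x - y| / (q - p) := by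
    rw [abs_div, abs_of_pos hh]
  have b1 : |(4 - 3 * (t + s)) * ((x - y) / (q - p))| ≤ 4 * (|x - y| / (q - p)) := by
    rw [abs_mul, hw]
    have : |4 - 3 * (t + s)| ≤ 4 := abs_le.mpr ⟨by nlinarith, by nlinarith⟩
    exact mul_le_mul_of_nonneg_right this (by positivity)
  have b2 : |(2 - 3 * (t + s)) * ((x - y) / (q - p))| ≤ 4 * (|x - y| / (q - p)) := by
    rw [abs_mul, hw]
    have : |2 - 3 * (t + s)| ≤ 4 := abs_le.mpr ⟨by nlinarith, by nlinarith⟩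
    exact mul_le_mul_of_nonneg_right this (by positivity)
  rw [key]
  calc |_ + _| ≤ |((fq - fp) / (q - p) - gp)| * |(4 - 3 * (t + s)) * ((x - y) / (q - p))|
      + |((fq - fp) / (q - p) - gq)| * |(2 - 3 * (t + s)) * ((x - y) / (q - p))| := by
        rw [← abs_mul, ← abs_mul]; exact abs_add_le _ _
    _ ≤ E * (4 * (|x - y| / (q - p))) + E * (4 * (|x - y| / (q - p))) :=
        add_le_add (mul_le_mul h1 b1 (abs_nonneg _) hE) (mul_le_mul h2 b2 (abs_nonneg _) hE)
    _ = 8 * E * (|x - y| / (q - p)) := by ring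

end herm

private theorem exists_g
    (T₁ T₂ α : ℝ) (S : Set ℝ) (f : ℝ → ℝ)
    (hT₁ : 0 < T₁) (hT₂ : 0 < T₂) (hα : 0 < α) (hα1 : α ≤ 1)
    (hS : IsClosed S)
    (h1 : ∀ x ∈ S, ∀ y ∈ S, x ≠ y → |f x - f y| ≤ T₁ * |x - y|)
    (h2 : ∀ x ∈ S, ∀ y ∈ S, ∀ z ∈ S, x ≠ y → y ≠ z → x ≠ z →
      |(f x - f y) / (x - y) - (f y - f z) / (y - z)| ≤
        T₂ * Metric.diam ({x, y, z} : Set ℝ) ^ α) :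
    ∃ g : ℝ → ℝ, (∀ s ∈ S, |g s| ≤ T₁) ∧
      (∀ s ∈ S, ∀ t ∈ S, |f t - f s - g s * (t - s)| ≤ 2 * T₂ * |t - s| ^ α * |t - s|) ∧
      (∀ s ∈ S, ∀ t ∈ S, |g s - g t| ≤ 4 * T₂ * |s - t| ^ α) := by
  classical
  set Q : ℝ → ℝ → ℝ := fun x y => (f x - f y) / (x - y) with hQdef
  have hQsym : ∀ x y, Q x y = Q y x := by
    intro x y
    simp only [hQdef]
    rw [← neg_div_neg_eq, neg_sub, neg_sub]
  have hQbd : ∀ x ∈ S, ∀ y ∈ S, x ≠ y → |Q x y| ≤ T₁ := by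
    intro x hx y hy hxy
    have hd : 0 < |x - y| := abs_pos.mpr (sub_ne_zero.mpr hxy)
    simp only [hQdef]
    rw [abs_div, div_le_iff₀ hd]
    exact h1 x hx y hy hxy
  have hQclose : ∀ s ∈ S, ∀ u ∈ S, ∀ t ∈ S, u ≠ s → t ≠ s → |u - s| ≤ |t - s| →
      |Q s u - Q s t| ≤ 2 * T₂ * |t - s| ^ α := by
    intro s hs u hu t ht hus hts hle
    by_cases hut : u = t
    · subst hut; simp only [sub_self, abs_zero]; positivity
    · have hd : Metric.diam ({u, s, t} : Set ℝ) ≤ 2 * |t - s| := by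
        rw [Metric.diam_triple]
        have e1 : dist u s = |u - s| := Real.dist_eq u s
        have e2 : dist u t = |u - t| := Real.dist_eq u t
        have e3 : dist s t = |s - t| := Real.dist_eq s t
        have habs : |u - t| ≤ |u - s| + |s - t| := abs_sub_le u s t
        have hst : |s - t| = |t - s| := abs_sub_comm s t
        refine max_le (max_le ?_ ?_) ?_
        · rw [e1]; linarith [abs_nonneg (t - s)]
        · rw [e2]; linarith [abs_nonneg (t - s)]
        · rw [e3]; linarith [abs_nonneg (t - s)]
      have := h2 u hu s hs t ht hus (fun h => hts h.symm) hut
      have hsu : (f u - f s) / (u - s) = Q s u := (hQsym s u).symm ▸ rfl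
      have hcalc : T₂ * Metric.diam ({u, s, t} : Set ℝ) ^ α ≤ 2 * T₂ * |t - s| ^ α := by
        have hd2 : Metric.diam ({u, s, t} : Set ℝ) ^ α ≤ (2 * |t - s|) ^ α :=
          Real.rpow_le_rpow Metric.diam_nonneg hd hα.le
        have hd3 : (2 * |t - s|) ^ α ≤ 2 * |t - s| ^ α := by
          rw [Real.mul_rpow (by norm_num) (abs_nonneg _)]
          have : (2:ℝ) ^ α ≤ 2 := by
            calc (2:ℝ) ^ α ≤ (2:ℝ) ^ (1:ℝ) := Real.rpow_le_rpow_of_exponent_le one_le_two hα1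
              _ = 2 := Real.rpow_one 2
          exact mul_le_mul_of_nonneg_right this (Real.rpow_nonneg (abs_nonneg _) α)
        calc T₂ * Metric.diam ({u, s, t} : Set ℝ) ^ α ≤ T₂ * (2 * |t - s| ^ α) := by
              refine mul_le_mul_of_nonneg_left (le_trans hd2 hd3) hT₂.le
          _ = 2 * T₂ * |t - s| ^ α := by ring
      calc |Q s u - Q s t| = |(f u - f s) / (u - s) - (f s - f t) / (s - t)| := by
            rw [hQsym s u]
        _ ≤ T₂ * Metric.diam ({u, s, t} : Set ℝ) ^ α := this
        _ ≤ 2 * T₂ * |t - s| ^ α := hcalc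
  have hex : ∀ s : ℝ, ∃ L : ℝ, s ∈ S →
      ((∀ t ∈ S, t ≠ s → |L - Q s t| ≤ 2 * T₂ * |t - s| ^ α) ∧ |L| ≤ T₁) := by
    intro s
    by_cases hsS : s ∈ S
    swap
    · exact ⟨0, fun h => absurd h hsS⟩
    by_cases hacc : s ∈ closure (S \ {s})
    · haveI hNB : (𝓝[S \ {s}] s).NeBot := mem_closure_iff_nhdsWithin_neBot.mp hacc
      have hcauchy : Cauchy (Filter.map (Q s) (𝓝[S \ {s}] s)) := by
        rw [Metric.cauchy_iff]
        refine ⟨Filter.map_neBot, fun ε hε => ?_⟩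
        set δ : ℝ := (ε / (2 * (2 * T₂))) ^ (1 / α) with hδdef
        have hδpos : 0 < δ := Real.rpow_pos_of_pos (by positivity) _
        have hδα : δ ^ α = ε / (2 * (2 * T₂)) := by
          have hb : (0:ℝ) ≤ ε / (2 * (2 * T₂)) := by positivity
          rw [hδdef, ← Real.rpow_mul hb, one_div, inv_mul_cancel₀ hα.ne', Real.rpow_one]
        refine ⟨(Q s) '' ((S \ {s}) ∩ Metric.ball s δ), ?_, ?_⟩
        · exact Filter.image_mem_map (inter_mem self_mem_nhdsWithin
            (mem_nhdsWithin_of_mem_nhds (Metric.ball_mem_nhds s hδpos)))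
        · rintro _ ⟨u, ⟨⟨huS, hus⟩, hub⟩, rfl⟩ _ ⟨v, ⟨⟨hvS, hvs⟩, hvb⟩, rfl⟩
          have hus' : u ≠ s := hus
          have hvs' : v ≠ s := hvs
          have hubd : |u - s| < δ := by rw [← Real.dist_eq]; exact hub
          have hvbd : |v - s| < δ := by rw [← Real.dist_eq]; exact hvb
          have hkey : ∀ w z : ℝ, w ∈ S → z ∈ S → w ≠ s → z ≠ s → |w - s| ≤ |z - s| →
              |z - s| < δ → |Q s w - Q s z| < ε := by
            intro w z hw hz hws hzs hle hzd
            have := hQclose s hsS w hw z hz hws hzs hle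
            have h2' : 2 * T₂ * |z - s| ^ α ≤ 2 * T₂ * δ ^ α := by
              refine mul_le_mul_of_nonneg_left ?_ (by positivity)
              exact Real.rpow_le_rpow (abs_nonneg _) hzd.le hα.le
            rw [hδα] at h2'
            have h3' : 2 * T₂ * (ε / (2 * (2 * T₂))) = ε / 2 := by field_simp
            rw [h3'] at h2'
            linarith
          rw [Real.dist_eq]
          rcases le_total |u - s| |v - s| with hc | hc
          · exact hkey u v huS hvS hus' hvs' hc hvbd
          · rw [abs_sub_comm]; exact hkey v u hvS huS hvs' hus' hc hubd
      obtain ⟨L, hL⟩ := CompleteSpace.complete hcauchy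
      have hLt : Tendsto (Q s) (𝓝[S \ {s}] s) (𝓝 L) := hL
      refine ⟨L, fun _ => ⟨?_, ?_⟩⟩
      · intro t htS hts
        have hball : Metric.ball s |t - s| ∈ 𝓝 s :=
          Metric.ball_mem_nhds s (abs_pos.mpr (sub_ne_zero.mpr hts))
        have hev : ∀ᶠ u in 𝓝[S \ {s}] s, |Q s u - Q s t| ≤ 2 * T₂ * |t - s| ^ α := by
          filter_upwards [self_mem_nhdsWithin, mem_nhdsWithin_of_mem_nhds hball] with u hu hub
          exact hQclose s hsS u hu.1 t htS hu.2 hts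
            (le_of_lt (by rw [← Real.dist_eq]; exact hub))
        have htd : Tendsto (fun u => |Q s u - Q s t|) (𝓝[S \ {s}] s) (𝓝 |L - Q s t|) :=
          ((hLt.sub_const (Q s t)).abs)
        exact le_of_tendsto htd hev
      · refine le_of_tendsto hLt.abs ?_
        filter_upwards [self_mem_nhdsWithin] with u hu
        exact hQbd s hsS u hu.1 (fun h => hu.2 h.symm)
    · by_cases hne : (S \ {s}).Nonempty
      · have hclosed : IsClosed (S \ {s}) := by
          refine isClosed_of_closure_subset ?_
          intro z hz
          have hzS : z ∈ S := hS.closure_subset ((closure_mono diff_subset) hz)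
          refine ⟨hzS, ?_⟩
          intro hzs
          rw [mem_singleton_iff] at hzs
          subst hzs
          exact hacc hz
        obtain ⟨t₀, ht₀, hdist⟩ := hclosed.exists_infDist_eq_dist hne s
        refine ⟨Q s t₀, fun _ => ⟨?_, hQbd s hsS t₀ ht₀.1 (fun h => ht₀.2 h.symm)⟩⟩
        intro t htS hts
        have hle : |t₀ - s| ≤ |t - s| := by
          have h1' : Metric.infDist s (S \ {s}) ≤ dist s t := Metric.infDist_le_dist_of_mem ⟨htS, hts⟩
          rw [hdist] at h1'
          rw [Real.dist_eq] at h1'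
          rw [abs_sub_comm t₀ s, abs_sub_comm t s]
          exact h1'
        exact hQclose s hsS t₀ ht₀.1 t htS ht₀.2 hts hle
      · refine ⟨0, fun _ => ⟨?_, by simpa using hT₁.le⟩⟩
        intro t htS hts
        exact absurd ⟨htS, hts⟩ (fun h => hne ⟨t, h⟩)
  choose g hg using hex
  refine ⟨g, fun s hs => (hg s hs).2, ?_, ?_⟩
  · intro s hs t ht
    by_cases hts : t = s
    · subst hts
      simp only [sub_self, mul_zero, sub_zero, abs_zero]
      positivity
    · have hQg := (hg s hs).1 t ht hts
      have hid : f t - f s - g s * (t - s) = (Q s t - g s) * (t - s) := by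
        have hst' : s - t ≠ 0 := sub_ne_zero.mpr (fun h => hts h.symm)
        simp only [hQdef]
        field_simp
        ring
      rw [hid, abs_mul]
      calc |Q s t - g s| * |t - s| ≤ (2 * T₂ * |t - s| ^ α) * |t - s| := by
            refine mul_le_mul_of_nonneg_right ?_ (abs_nonneg _)
            rw [abs_sub_comm]; exact hQg
        _ = 2 * T₂ * |t - s| ^ α * |t - s| := by ring
  · intro s hs t ht
    by_cases hts : s = t
    · subst hts; simp [Real.zero_rpow hα.ne']
    · have e1 := (hg s hs).1 t ht (fun h => hts h.symm)
      have e2 := (hg t ht).1 s hs hts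
      have hQst : Q s t = Q t s := hQsym s t
      calc |g s - g t| = |(g s - Q s t) + (Q t s - g t)| := by rw [hQst]; ring_nf
        _ ≤ |g s - Q s t| + |Q t s - g t| := abs_add_le _ _
        _ ≤ 2 * T₂ * |t - s| ^ α + 2 * T₂ * |s - t| ^ α := by
            refine add_le_add e1 ?_
            rw [abs_sub_comm]; exact e2
        _ = 4 * T₂ * |s - t| ^ α := by rw [abs_sub_comm t s]; ring

set_option maxHeartbeats 2000000 in
private theorem main_ext
    (T₁ T₂ α : ℝ) (S : Set ℝ) (f g : ℝ → ℝ)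
    (hT₁ : 0 < T₁) (hT₂ : 0 < T₂) (hα : 0 < α) (hα1 : α ≤ 1)
    (hS : IsClosed S) (hne : S.Nonempty) (hbdd : BddBelow S) (hbdd' : BddAbove S)
    (hsize : ∀ s ∈ S, ∀ t ∈ S, T₂ * |s - t| ^ α ≤ T₁)
    (hg1 : ∀ s ∈ S, |g s| ≤ T₁)
    (hA : ∀ s ∈ S, ∀ t ∈ S, |f t - f s - g s * (t - s)| ≤ 2 * T₂ * |t - s| ^ α * |t - s|)
    (hg2 : ∀ s ∈ S, ∀ t ∈ S, |g s - g t| ≤ 4 * T₂ * |s - t| ^ α) :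
    ∃ F F' : ℝ → ℝ, (∀ x, HasDerivAt F (F' x) x) ∧ (∀ x ∈ S, F x = f x) ∧
      (∀ x, |F' x| ≤ 50 * T₁) ∧ (∀ x y, |F' x - F' y| ≤ 50 * T₂ * |x - y| ^ α) := by
  classical
  set m := sInf S with hmdef
  set M := sSup S with hMdef
  have hmS : m ∈ S := hS.csInf_mem hne hbdd
  have hMS : M ∈ S := hS.csSup_mem hne hbdd'
  have hmle : ∀ s ∈ S, m ≤ s := fun s hs => csInf_le hbdd hs
  have hleM : ∀ s ∈ S, s ≤ M := fun s hs => le_csSup hbdd' hs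
  have hmM : m ≤ M := hmle M hMS
  set aa : ℝ → ℝ := fun x => sSup (S ∩ Iic x) with haadef
  set bb : ℝ → ℝ := fun x => sInf (S ∩ Ici x) with hbbdef
  have haaP : ∀ x, m ≤ x → aa x ∈ S ∧ aa x ≤ x ∧ ∀ s ∈ S, s ≤ x → s ≤ aa x := by
    intro x hx
    have hne' : (S ∩ Iic x).Nonempty := ⟨m, hmS, hx⟩
    have hbd : BddAbove (S ∩ Iic x) := BddAbove.mono inter_subset_right bddAbove_Iic
    have hcl : IsClosed (S ∩ Iic x) := hS.inter isClosed_Iic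
    have hmem := hcl.csSup_mem hne' hbd
    exact ⟨hmem.1, hmem.2, fun s hs hsx => le_csSup hbd ⟨hs, hsx⟩⟩
  have hbbP : ∀ x, x ≤ M → bb x ∈ S ∧ x ≤ bb x ∧ ∀ s ∈ S, x ≤ s → bb x ≤ s := by
    intro x hx
    have hne' : (S ∩ Ici x).Nonempty := ⟨M, hMS, hx⟩
    have hbd : BddBelow (S ∩ Ici x) := BddBelow.mono inter_subset_right bddBelow_Ici
    have hcl : IsClosed (S ∩ Ici x) := hS.inter isClosed_Ici
    have hmem := hcl.csInf_mem hne' hbd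
    exact ⟨hmem.1, hmem.2, fun s hs hsx => csInf_le hbd ⟨hs, hsx⟩⟩
  have hgapP : ∀ x, x ∉ S → m < x → x < M → aa x < x ∧ x < bb x := by
    intro x hx h1 h2
    have h3 := (haaP x h1.le).2.1
    have h4 := (hbbP x h2.le).2.1
    constructor
    · exact lt_of_le_of_ne h3 (fun h => hx (h ▸ (haaP x h1.le).1))
    · exact lt_of_le_of_ne h4 (fun h => hx (h ▸ (hbbP x h2.le).1))
  have hsep : ∀ x, x ∉ S → m < x → x < M → ∀ s ∈ S, s ≤ aa x ∨ bb x ≤ s := by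
    intro x hx h1 h2 s hs
    rcases le_total s x with h | h
    · exact Or.inl ((haaP x h1.le).2.2 s hs h)
    · exact Or.inr ((hbbP x h2.le).2.2 s hs h)
  have hloc : ∀ x, x ∉ S → m < x → x < M → ∀ y, aa x < y → y < bb x →
      y ∉ S ∧ m < y ∧ y < M ∧ aa y = aa x ∧ bb y = bb x := by
    intro x hx hmx hxM y hay hyb
    have haxS := (haaP x hmx.le).1
    have hbxS := (hbbP x hxM.le).1
    have hyS : y ∉ S := by
      intro hyS
      rcases hsep x hx hmx hxM y hyS with h | h
      · linarith
      · linarith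
    have hmy : m < y := lt_of_le_of_lt (hmle (aa x) haxS) hay
    have hyM : y < M := lt_of_lt_of_le hyb (hleM (bb x) hbxS)
    refine ⟨hyS, hmy, hyM, ?_, ?_⟩
    · apply le_antisymm
      · rcases hsep x hx hmx hxM (aa y) (haaP y hmy.le).1 with h | h
        · exact h
        · exfalso
          have := (haaP y hmy.le).2.1
          linarith
      · exact (haaP y hmy.le).2.2 (aa x) haxS hay.le
    · apply le_antisymm
      · exact (hbbP y hyM.le).2.2 (bb x) hbxS hyb.le
      · rcases hsep x hx hmx hxM (bb y) (hbbP y hyM.le).1 with h | h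
        · exfalso
          have := (hbbP y hyM.le).2.1
          linarith
        · exact h
  have hdivE : ∀ p q : ℝ, p ∈ S → q ∈ S → p < q →
      |(f q - f p) / (q - p) - g p| ≤ 2 * T₂ * (q - p) ^ α := by
    intro p q hp hq hpq
    have hh : 0 < q - p := sub_pos.2 hpq
    have hAq := hA p hp q hq
    rw [show |q - p| = q - p from abs_of_pos hh] at hAq
    have hid : (f q - f p) / (q - p) - g p = (f q - f p - g p * (q - p)) / (q - p) := by
      field_simp
    rw [hid, abs_div, abs_of_pos hh, div_le_iff₀ hh]
    exact hAq
  have hdivE' : ∀ p q : ℝ, p ∈ S → q ∈ S → p < q →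
      |(f q - f p) / (q - p) - g q| ≤ 2 * T₂ * (q - p) ^ α := by
    intro p q hp hq hpq
    have hh : 0 < q - p := sub_pos.2 hpq
    have hAq := hA q hq p hp
    rw [show |p - q| = q - p from by rw [abs_sub_comm]; exact abs_of_pos hh] at hAq
    rw [show f p - f q - g q * (p - q) = -(f q - f p - g q * (q - p)) from by ring, abs_neg] at hAq
    have hid : (f q - f p) / (q - p) - g q = (f q - f p - g q * (q - p)) / (q - p) := by
      field_simp
    rw [hid, abs_div, abs_of_pos hh, div_le_iff₀ hh]
    exact hAq
  set F' : ℝ → ℝ := fun x =>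
    if x ∈ S then g x else if x ≤ m then g m else if M ≤ x then g M
    else hermD (f (aa x)) (f (bb x)) (g (aa x)) (g (bb x)) (aa x) (bb x) x with hF'
  set F : ℝ → ℝ := fun x =>
    if x ∈ S then f x else if x ≤ m then f m + g m * (x - m)
    else if M ≤ x then f M + g M * (x - M)
    else hermV (f (aa x)) (f (bb x)) (g (aa x)) (g (bb x)) (aa x) (bb x) x with hF
  have hglue : ∀ x ∈ S, ∀ w ∈ S, ∀ y r : ℝ,
      |r - f w - g w * (y - w)| ≤ 12 * T₂ * |y - w| ^ α * |y - w| →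
      |w - x| ≤ |y - x| → |y - w| ≤ |y - x| →
      |r - f x - g x * (y - x)| ≤ 18 * T₂ * |y - x| ^ α * |y - x| := by
    intro x hx w hw y r hr h1' h2'
    have e2 := hA x hx w hw
    have e3 := hg2 w hw x hx
    have hR0 : (0:ℝ) ≤ |y - x| := abs_nonneg _
    have hr1 : |y - w| ^ α ≤ |y - x| ^ α := Real.rpow_le_rpow (abs_nonneg _) h2' hα.le
    have hr2 : |w - x| ^ α ≤ |y - x| ^ α := Real.rpow_le_rpow (abs_nonneg _) h1' hα.le
    have hid : r - f x - g x * (y - x) = (r - f w - g w * (y - w)) +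
        (f w - f x - g x * (w - x)) + (g w - g x) * (y - w) := by ring
    rw [hid]
    have t1 : |r - f w - g w * (y - w)| ≤ 12 * T₂ * |y - x| ^ α * |y - x| := by
      refine le_trans hr ?_
      have := mul_le_mul (mul_le_mul_of_nonneg_left hr1 (by positivity : (0:ℝ) ≤ 12 * T₂))
        h2' (abs_nonneg _) (by positivity)
      linarith [this]
    have t2 : |f w - f x - g x * (w - x)| ≤ 2 * T₂ * |y - x| ^ α * |y - x| := by
      refine le_trans e2 ?_
      have := mul_le_mul (mul_le_mul_of_nonneg_left hr2 (by positivity : (0:ℝ) ≤ 2 * T₂))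
        h1' (abs_nonneg _) (by positivity)
      linarith [this]
    have t3 : |(g w - g x) * (y - w)| ≤ 4 * T₂ * |y - x| ^ α * |y - x| := by
      rw [abs_mul]
      have h4 : |g w - g x| ≤ 4 * T₂ * |y - x| ^ α := by
        refine le_trans e3 ?_
        exact mul_le_mul_of_nonneg_left hr2 (by positivity)
      exact mul_le_mul h4 h2' (abs_nonneg _) (by positivity)
    calc |_ + _ + _| ≤ |(r - f w - g w * (y - w)) + (f w - f x - g x * (w - x))|
        + |(g w - g x) * (y - w)| := abs_add_le _ _
      _ ≤ |r - f w - g w * (y - w)| + |f w - f x - g x * (w - x)|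
        + |(g w - g x) * (y - w)| := by linarith [abs_add_le (r - f w - g w * (y - w)) (f w - f x - g x * (w - x))]
      _ ≤ 18 * T₂ * |y - x| ^ α * |y - x| := by linarith
  have htay : ∀ x ∈ S, ∀ y : ℝ, |F y - f x - g x * (y - x)| ≤ 18 * T₂ * |y - x| ^ α * |y - x| := by
    intro x hx y
    by_cases hyS : y ∈ S
    · have h0 : F y = f y := by simp only [hF]; rw [if_pos hyS]
      refine hglue x hx y hyS y (F y) ?_ (le_refl _) (by simp)
      rw [h0]
      simp
    · by_cases hym : y ≤ m
      · have hym' : y < m := lt_of_le_of_ne hym (fun h => hyS (h ▸ hmS))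
        have hFy : F y = f m + g m * (y - m) := by
          simp only [hF]; rw [if_neg hyS, if_pos hym]
        have hmx : m ≤ x := hmle x hx
        refine hglue x hx m hmS y (F y) ?_ ?_ ?_
        · rw [hFy, show f m + g m * (y - m) - f m - g m * (y - m) = 0 from by ring, abs_zero]
          positivity
        · rw [abs_sub_comm m x, abs_of_nonneg (by linarith : (0:ℝ) ≤ x - m),
            abs_sub_comm y x, abs_of_nonneg (by linarith : (0:ℝ) ≤ x - y)]
          linarith
        · rw [abs_of_nonpos (by linarith : y - m ≤ 0),
            abs_sub_comm y x, abs_of_nonneg (by linarith : (0:ℝ) ≤ x - y)]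
          linarith
      · by_cases hyM : M ≤ y
        · have hyM' : M < y := lt_of_le_of_ne hyM (fun h => hyS (h ▸ hMS))
          have hFy : F y = f M + g M * (y - M) := by
            simp only [hF]; rw [if_neg hyS, if_neg hym, if_pos hyM]
          have hxM : x ≤ M := hleM x hx
          refine hglue x hx M hMS y (F y) ?_ ?_ ?_
          · rw [hFy, show f M + g M * (y - M) - f M - g M * (y - M) = 0 from by ring, abs_zero]
            positivity
          · rw [abs_of_nonneg (by linarith : (0:ℝ) ≤ M - x),
              abs_of_nonneg (by linarith : (0:ℝ) ≤ y - x)]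
            linarith
          · rw [abs_of_nonneg (by linarith : (0:ℝ) ≤ y - M),
              abs_of_nonneg (by linarith : (0:ℝ) ≤ y - x)]
            linarith
        · have hmy : m < y := not_le.mp hym
          have hyM' : y < M := not_le.mp hyM
          have hgp := hgapP y hyS hmy hyM'
          have hpS := (haaP y hmy.le).1
          have hqS := (hbbP y hyM'.le).1
          have hpq : aa y < bb y := lt_trans hgp.1 hgp.2
          have hE1 := hdivE (aa y) (bb y) hpS hqS hpq
          have hE2 := hdivE' (aa y) (bb y) hpS hqS hpq
          have hFy : F y = hermV (f (aa y)) (f (bb y)) (g (aa y)) (g (bb y)) (aa y) (bb y) y := by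
            simp only [hF]; rw [if_neg hyS, if_neg hym, if_neg hyM]
          have hyIcc : y ∈ Icc (aa y) (bb y) := ⟨hgp.1.le, hgp.2.le⟩
          rcases hsep y hyS hmy hyM' x hx with hxp | hxq
          · refine hglue x hx (aa y) hpS y (F y) ?_ ?_ ?_
            · rw [hFy]
              have hT := hermV_taylor_left hpq hE1 hE2 hyIcc
              have habs : |y - aa y| = y - aa y := abs_of_pos (sub_pos.2 hgp.1)
              rw [habs]
              refine le_trans hT ?_
              have hkey : (bb y - aa y) ^ α * ((y - aa y) / (bb y - aa y)) ≤ (y - aa y) ^ α :=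
                rpow_R3 hα hα1 (by linarith [hgp.1] : (0:ℝ) ≤ y - aa y) (by linarith [hgp.2])
              calc 6 * (2 * T₂ * (bb y - aa y) ^ α) * (y - aa y) * ((y - aa y) / (bb y - aa y))
                  = 12 * T₂ * ((bb y - aa y) ^ α * ((y - aa y) / (bb y - aa y))) * (y - aa y) := by
                    ring
                _ ≤ 12 * T₂ * (y - aa y) ^ α * (y - aa y) := by
                    refine mul_le_mul_of_nonneg_right
                      (mul_le_mul_of_nonneg_left hkey (by positivity)) (by linarith [hgp.1])
            · rw [abs_of_nonneg (by linarith [hgp.1] : (0:ℝ) ≤ aa y - x),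
                abs_of_nonneg (by linarith [hgp.1] : (0:ℝ) ≤ y - x)]
              linarith [hgp.1]
            · rw [abs_of_nonneg (by linarith [hgp.1] : (0:ℝ) ≤ y - aa y),
                abs_of_nonneg (by linarith [hgp.1] : (0:ℝ) ≤ y - x)]
              linarith [hgp.1]
          · refine hglue x hx (bb y) hqS y (F y) ?_ ?_ ?_
            · rw [hFy]
              have hT := hermV_taylor_right hpq hE1 hE2 hyIcc
              have habs : |y - bb y| = bb y - y := by
                rw [abs_sub_comm]; exact abs_of_pos (sub_pos.2 hgp.2)
              rw [habs]
              refine le_trans hT ?_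
              have hkey : (bb y - aa y) ^ α * ((bb y - y) / (bb y - aa y)) ≤ (bb y - y) ^ α :=
                rpow_R3 hα hα1 (by linarith [hgp.2] : (0:ℝ) ≤ bb y - y) (by linarith [hgp.1])
              calc 6 * (2 * T₂ * (bb y - aa y) ^ α) * (bb y - y) * ((bb y - y) / (bb y - aa y))
                  = 12 * T₂ * ((bb y - aa y) ^ α * ((bb y - y) / (bb y - aa y))) * (bb y - y) := by
                    ring
                _ ≤ 12 * T₂ * (bb y - y) ^ α * (bb y - y) := by
                    refine mul_le_mul_of_nonneg_right
                      (mul_le_mul_of_nonneg_left hkey (by positivity)) (by linarith [hgp.2])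
            · rw [abs_of_nonpos (by linarith [hgp.2] : bb y - x ≤ 0),
                abs_sub_comm y x, abs_of_nonneg (by linarith [hgp.2] : (0:ℝ) ≤ x - y)]
              linarith [hgp.2]
            · rw [abs_of_nonpos (by linarith [hgp.2] : y - bb y ≤ 0),
                abs_sub_comm y x, abs_of_nonneg (by linarith [hgp.2] : (0:ℝ) ≤ x - y)]
              linarith [hgp.2]
  have hval : ∀ x ∈ S, F x = f x := by
    intro x hx
    simp only [hF]; rw [if_pos hx]
  have hderiv : ∀ x, HasDerivAt F (F' x) x := by
    intro x
    by_cases hxS : x ∈ S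
    · have hFx : F x = f x := hval x hxS
      have hF'x : F' x = g x := by simp only [hF']; rw [if_pos hxS]
      rw [hF'x, hasDerivAt_iff_isLittleO, Asymptotics.isLittleO_iff]
      intro c hc
      have hten : Tendsto (fun y : ℝ => 18 * T₂ * |y - x| ^ α) (𝓝 x) (𝓝 0) := by
        have h1' : Tendsto (fun y : ℝ => |y - x|) (𝓝 x) (𝓝 0) := by
          have hcont : Continuous (fun y : ℝ => |y - x|) :=
            (continuous_id.sub continuous_const).abs
          simpa using hcont.tendsto x
        have h2' : ContinuousAt (fun r : ℝ => r ^ α) 0 :=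
          Real.continuousAt_rpow_const 0 α (Or.inr hα.le)
        have h3' := (h2'.tendsto).comp h1'
        rw [Real.zero_rpow hα.ne'] at h3'
        have h4' := h3'.const_mul (18 * T₂)
        simpa using h4'
      filter_upwards [hten.eventually (gt_mem_nhds hc)] with y hy
      have ht := htay x hxS y
      rw [hFx]
      have hidn : F y - f x - (y - x) • g x = F y - f x - g x * (y - x) := by
        simp [smul_eq_mul]; ring
      rw [hidn, Real.norm_eq_abs, Real.norm_eq_abs]
      calc |F y - f x - g x * (y - x)| ≤ 18 * T₂ * |y - x| ^ α * |y - x| := ht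
        _ ≤ c * |y - x| := mul_le_mul_of_nonneg_right hy.le (abs_nonneg _)
    · by_cases hxm : x ≤ m
      · have hxm' : x < m := lt_of_le_of_ne hxm (fun h => hxS (h ▸ hmS))
        have hF'x : F' x = g m := by simp only [hF']; rw [if_neg hxS, if_pos hxm]
        have hder : HasDerivAt (fun y : ℝ => f m + g m * (y - m)) (g m) x := by
          have := (((hasDerivAt_id x).sub_const m).const_mul (g m)).const_add (f m)
          simpa using this
        rw [hF'x]
        refine hder.congr_of_eventuallyEq ?_
        filter_upwards [Iio_mem_nhds hxm'] with y hy
        have hyS : y ∉ S := fun h => absurd (hmle y h) (not_le.mpr hy)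
        simp only [hF]; rw [if_neg hyS, if_pos (le_of_lt hy)]
      · by_cases hxM : M ≤ x
        · have hxM' : M < x := lt_of_le_of_ne hxM (fun h => hxS (h ▸ hMS))
          have hF'x : F' x = g M := by simp only [hF']; rw [if_neg hxS, if_neg hxm, if_pos hxM]
          have hder : HasDerivAt (fun y : ℝ => f M + g M * (y - M)) (g M) x := by
            have := (((hasDerivAt_id x).sub_const M).const_mul (g M)).const_add (f M)
            simpa using this
          rw [hF'x]
          refine hder.congr_of_eventuallyEq ?_
          filter_upwards [Ioi_mem_nhds hxM'] with y hy
          have hyS : y ∉ S := fun h => absurd (hleM y h) (not_le.mpr hy)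
          have hym : ¬ y ≤ m := not_le.mpr (lt_of_le_of_lt hmM hy)
          simp only [hF]; rw [if_neg hyS, if_neg hym, if_pos (le_of_lt hy)]
        · have hmx : m < x := not_le.mp hxm
          have hxM' : x < M := not_le.mp hxM
          have hgp := hgapP x hxS hmx hxM'
          have hF'x : F' x = hermD (f (aa x)) (f (bb x)) (g (aa x)) (g (bb x)) (aa x) (bb x) x := by
            simp only [hF']; rw [if_neg hxS, if_neg hxm, if_neg hxM]
          rw [hF'x]
          refine (hermV_hasDeriv (f (aa x)) (f (bb x)) (g (aa x)) (g (bb x)) (aa x) (bb x) x).congr_of_eventuallyEq ?_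
          filter_upwards [Ioo_mem_nhds hgp.1 hgp.2] with y hy
          obtain ⟨hyS, hmy, hyM, haay, hbby⟩ := hloc x hxS hmx hxM' y hy.1 hy.2
          simp only [hF]
          rw [if_neg hyS, if_neg (not_le.mpr hmy), if_neg (not_le.mpr hyM), haay, hbby]
  have hbound : ∀ x, |F' x| ≤ 50 * T₁ := by
    intro x
    by_cases hxS : x ∈ S
    · rw [show F' x = g x from by simp only [hF']; rw [if_pos hxS]]
      linarith [hg1 x hxS]
    · by_cases hxm : x ≤ m
      · rw [show F' x = g m from by simp only [hF']; rw [if_neg hxS, if_pos hxm]]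
        linarith [hg1 m hmS]
      · by_cases hxM : M ≤ x
        · rw [show F' x = g M from by simp only [hF']; rw [if_neg hxS, if_neg hxm, if_pos hxM]]
          linarith [hg1 M hMS]
        · have hmx : m < x := not_le.mp hxm
          have hxM' : x < M := not_le.mp hxM
          have hgp := hgapP x hxS hmx hxM'
          have hpS := (haaP x hmx.le).1
          have hqS := (hbbP x hxM'.le).1
          have hpq : aa x < bb x := lt_trans hgp.1 hgp.2
          have hE1 := hdivE (aa x) (bb x) hpS hqS hpq
          have hE2 := hdivE' (aa x) (bb x) hpS hqS hpq
          have hD := hermD_left hpq hE1 hE2 ⟨hgp.1.le, hgp.2.le⟩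
          have ht1 : (x - aa x) / (bb x - aa x) ≤ 1 :=
            div_le_one_of_le₀ (by linarith [hgp.2]) (by linarith)
          have ht0 : 0 ≤ (x - aa x) / (bb x - aa x) :=
            div_nonneg (by linarith [hgp.1]) (by linarith)
          have hsz : T₂ * (bb x - aa x) ^ α ≤ T₁ := by
            have := hsize (aa x) hpS (bb x) hqS
            rwa [show |aa x - bb x| = bb x - aa x from by
              rw [abs_sub_comm]; exact abs_of_pos (sub_pos.2 hpq)] at this
          rw [show F' x = hermD (f (aa x)) (f (bb x)) (g (aa x)) (g (bb x)) (aa x) (bb x) x from by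
            simp only [hF']; rw [if_neg hxS, if_neg hxm, if_neg hxM]]
          have h7 : |hermD (f (aa x)) (f (bb x)) (g (aa x)) (g (bb x)) (aa x) (bb x) x - g (aa x)|
              ≤ 14 * T₁ := by
            refine le_trans hD ?_
            have hE0 : (0:ℝ) ≤ 2 * T₂ * (bb x - aa x) ^ α :=
              mul_nonneg (by linarith) (Real.rpow_nonneg (by linarith) α)
            calc 7 * (2 * T₂ * (bb x - aa x) ^ α) * ((x - aa x) / (bb x - aa x))
                ≤ 7 * (2 * T₂ * (bb x - aa x) ^ α) * 1 := by
                  refine mul_le_mul_of_nonneg_left ht1 (by linarith)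
              _ = 14 * (T₂ * (bb x - aa x) ^ α) := by ring
              _ ≤ 14 * T₁ := by linarith
          calc |hermD (f (aa x)) (f (bb x)) (g (aa x)) (g (bb x)) (aa x) (bb x) x|
              ≤ |g (aa x)| + |hermD (f (aa x)) (f (bb x)) (g (aa x)) (g (bb x)) (aa x) (bb x) x
                - g (aa x)| := by
                have := abs_add_le (g (aa x)) (hermD (f (aa x)) (f (bb x)) (g (aa x)) (g (bb x)) (aa x) (bb x) x - g (aa x))
                simpa using this
            _ ≤ T₁ + 14 * T₁ := add_le_add (hg1 (aa x) hpS) h7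
            _ ≤ 50 * T₁ := by linarith
  have hclamp : ∀ x, F' (max (min x M) m) = F' x := by
    intro x
    rcases le_total x m with h | h
    · rw [min_eq_left (le_trans h hmM), max_eq_right h]
      by_cases hxS : x ∈ S
      · rw [le_antisymm h (hmle x hxS)]
      · rw [show F' m = g m from by simp only [hF']; rw [if_pos hmS],
          show F' x = g m from by simp only [hF']; rw [if_neg hxS, if_pos h]]
    · rcases le_total M x with h2 | h2
      · rw [min_eq_right h2, max_eq_left hmM]
        by_cases hxS : x ∈ S
        · rw [le_antisymm (hleM x hxS) h2]
        · by_cases hxm : x ≤ m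
          · rw [le_antisymm (le_trans hxm hmM) h2]
          · rw [show F' M = g M from by simp only [hF']; rw [if_pos hMS],
              show F' x = g M from by simp only [hF']; rw [if_neg hxS, if_neg hxm, if_pos h2]]
      · rw [min_eq_left h2, max_eq_left h]
  have hanchR : ∀ x, m ≤ x → x ≤ M → |F' x - g (bb x)| ≤ 12 * T₂ * (bb x - x) ^ α := by
    intro x hmx hxM
    have hb := hbbP x hxM
    by_cases hxS : x ∈ S
    · have hbbx : bb x = x := le_antisymm (hb.2.2 x hxS (le_refl x)) hb.2.1
      rw [hbbx, show F' x = g x from by simp only [hF']; rw [if_pos hxS], sub_self, abs_zero]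
      exact mul_nonneg (by linarith) (Real.rpow_nonneg (by linarith) α)
    · have hmx' : m < x := lt_of_le_of_ne hmx (fun h => hxS (h ▸ hmS))
      have hxM' : x < M := lt_of_le_of_ne hxM (fun h => hxS (h ▸ hMS))
      have hgp := hgapP x hxS hmx' hxM'
      have hpS := (haaP x hmx'.le).1
      have hqS := (hbbP x hxM'.le).1
      have hpq : aa x < bb x := lt_trans hgp.1 hgp.2
      have hE1 := hdivE (aa x) (bb x) hpS hqS hpq
      have hE2 := hdivE' (aa x) (bb x) hpS hqS hpq
      have hD := hermD_right hpq hE1 hE2 ⟨hgp.1.le, hgp.2.le⟩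
      rw [show F' x = hermD (f (aa x)) (f (bb x)) (g (aa x)) (g (bb x)) (aa x) (bb x) x from by
        simp only [hF']; rw [if_neg hxS, if_neg (not_le.mpr hmx'), if_neg (not_le.mpr hxM')]]
      refine le_trans hD ?_
      have hkey : (bb x - aa x) ^ α * ((bb x - x) / (bb x - aa x)) ≤ (bb x - x) ^ α :=
        rpow_R3 hα hα1 (by linarith [hgp.2]) (by linarith [hgp.1])
      calc 6 * (2 * T₂ * (bb x - aa x) ^ α) * ((bb x - x) / (bb x - aa x))
          = 12 * T₂ * ((bb x - aa x) ^ α * ((bb x - x) / (bb x - aa x))) := by ring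
        _ ≤ 12 * T₂ * (bb x - x) ^ α := mul_le_mul_of_nonneg_left hkey (by linarith)
  have hanchL : ∀ x, m ≤ x → x ≤ M → |F' x - g (aa x)| ≤ 14 * T₂ * (x - aa x) ^ α := by
    intro x hmx hxM
    have ha := haaP x hmx
    by_cases hxS : x ∈ S
    · have haax : aa x = x := le_antisymm ha.2.1 (ha.2.2 x hxS (le_refl x))
      rw [haax, show F' x = g x from by simp only [hF']; rw [if_pos hxS], sub_self, abs_zero]
      exact mul_nonneg (by linarith) (Real.rpow_nonneg (by linarith) α)
    · have hmx' : m < x := lt_of_le_of_ne hmx (fun h => hxS (h ▸ hmS))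
      have hxM' : x < M := lt_of_le_of_ne hxM (fun h => hxS (h ▸ hMS))
      have hgp := hgapP x hxS hmx' hxM'
      have hpS := (haaP x hmx'.le).1
      have hqS := (hbbP x hxM'.le).1
      have hpq : aa x < bb x := lt_trans hgp.1 hgp.2
      have hE1 := hdivE (aa x) (bb x) hpS hqS hpq
      have hE2 := hdivE' (aa x) (bb x) hpS hqS hpq
      have hD := hermD_left hpq hE1 hE2 ⟨hgp.1.le, hgp.2.le⟩
      rw [show F' x = hermD (f (aa x)) (f (bb x)) (g (aa x)) (g (bb x)) (aa x) (bb x) x from by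
        simp only [hF']; rw [if_neg hxS, if_neg (not_le.mpr hmx'), if_neg (not_le.mpr hxM')]]
      refine le_trans hD ?_
      have hkey : (bb x - aa x) ^ α * ((x - aa x) / (bb x - aa x)) ≤ (x - aa x) ^ α :=
        rpow_R3 hα hα1 (by linarith [hgp.1]) (by linarith [hgp.2])
      calc 7 * (2 * T₂ * (bb x - aa x) ^ α) * ((x - aa x) / (bb x - aa x))
          = 14 * T₂ * ((bb x - aa x) ^ α * ((x - aa x) / (bb x - aa x))) := by ring
        _ ≤ 14 * T₂ * (x - aa x) ^ α := mul_le_mul_of_nonneg_left hkey (by linarith)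
  have hmain : ∀ x y, m ≤ x → x ≤ y → y ≤ M → |F' x - F' y| ≤ 44 * T₂ * (y - x) ^ α := by
    intro x y hmx hxy hyM
    have hxM : x ≤ M := le_trans hxy hyM
    have hmy : m ≤ y := le_trans hmx hxy
    by_cases hsep2 : (S ∩ Icc x y).Nonempty
    · obtain ⟨s, hsS, hsxy⟩ := hsep2
      have hbs : bb x ≤ s := (hbbP x hxM).2.2 s hsS hsxy.1
      have has : s ≤ aa y := (haaP y hmy).2.2 s hsS hsxy.2
      have hxb : x ≤ bb x := (hbbP x hxM).2.1
      have hay : aa y ≤ y := (haaP y hmy).2.1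
      have hR := hanchR x hmx hxM
      have hL := hanchL y hmy hyM
      have hgg := hg2 (bb x) (hbbP x hxM).1 (aa y) (haaP y hmy).1
      have hxy0 : (0:ℝ) ≤ y - x := by linarith
      have e1 : (bb x - x) ^ α ≤ (y - x) ^ α :=
        Real.rpow_le_rpow (by linarith) (by linarith) hα.le
      have e2 : |bb x - aa y| ^ α ≤ (y - x) ^ α := by
        refine Real.rpow_le_rpow (abs_nonneg _) ?_ hα.le
        rw [abs_of_nonpos (by linarith : bb x - aa y ≤ 0)]
        linarith
      have e3 : (y - aa y) ^ α ≤ (y - x) ^ α :=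
        Real.rpow_le_rpow (by linarith) (by linarith) hα.le
      calc |F' x - F' y|
          = |(F' x - g (bb x)) + ((g (bb x) - g (aa y)) + (g (aa y) - F' y))| := by ring_nf
        _ ≤ |F' x - g (bb x)| + |(g (bb x) - g (aa y)) + (g (aa y) - F' y)| := abs_add_le _ _
        _ ≤ |F' x - g (bb x)| + (|g (bb x) - g (aa y)| + |g (aa y) - F' y|) := by
            linarith [abs_add_le (g (bb x) - g (aa y)) (g (aa y) - F' y)]
        _ ≤ 12 * T₂ * (y - x) ^ α + (4 * T₂ * (y - x) ^ α + 14 * T₂ * (y - x) ^ α) := by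
            have b1 : |F' x - g (bb x)| ≤ 12 * T₂ * (y - x) ^ α :=
              le_trans hR (mul_le_mul_of_nonneg_left e1 (by linarith))
            have b2 : |g (bb x) - g (aa y)| ≤ 4 * T₂ * (y - x) ^ α :=
              le_trans hgg (mul_le_mul_of_nonneg_left e2 (by linarith))
            have b3 : |g (aa y) - F' y| ≤ 14 * T₂ * (y - x) ^ α := by
              rw [abs_sub_comm]
              exact le_trans hL (mul_le_mul_of_nonneg_left e3 (by linarith))
            linarith
        _ ≤ 44 * T₂ * (y - x) ^ α := by
            have : (0:ℝ) ≤ (y - x) ^ α := Real.rpow_nonneg hxy0 α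
            nlinarith
    · have hxS : x ∉ S := fun h => hsep2 ⟨x, h, le_refl x, hxy⟩
      have hyS : y ∉ S := fun h => hsep2 ⟨y, h, hxy, le_refl y⟩
      have hmx' : m < x := lt_of_le_of_ne hmx (fun h => hxS (h ▸ hmS))
      have hyM' : y < M := lt_of_le_of_ne hyM (fun h => hyS (h ▸ hMS))
      have hmy' : m < y := lt_of_lt_of_le hmx' hxy
      have hxM' : x < M := lt_of_le_of_lt hxy hyM'
      have hgpx := hgapP x hxS hmx' hxM'
      have hgpy := hgapP y hyS hmy' hyM'
      have hpS := (haaP x hmx'.le).1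
      have hqS := (hbbP x hxM'.le).1
      have hbxnot : ¬ bb x < y := by
        intro hlt
        exact hsep2 ⟨bb x, hqS, (hbbP x hxM'.le).2.1, hlt.le⟩
      have haynot : ¬ x < aa y := by
        intro hlt
        exact hsep2 ⟨aa y, (haaP y hmy'.le).1, hlt.le, (haaP y hmy'.le).2.1⟩
      have haaeq : aa y = aa x := by
        apply le_antisymm
        · exact (haaP x hmx'.le).2.2 (aa y) (haaP y hmy'.le).1 (not_lt.mp haynot)
        · exact (haaP y hmy'.le).2.2 (aa x) hpS (le_trans (haaP x hmx'.le).2.1 hxy)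
      have hbbeq : bb y = bb x := by
        apply le_antisymm
        · exact (hbbP y hyM'.le).2.2 (bb x) hqS (not_lt.mp hbxnot)
        · exact (hbbP x hxM'.le).2.2 (bb y) (hbbP y hyM'.le).1 (le_trans hxy (hbbP y hyM'.le).2.1)
      have hpq : aa x < bb x := lt_trans hgpx.1 hgpx.2
      have hE1 := hdivE (aa x) (bb x) hpS hqS hpq
      have hE2 := hdivE' (aa x) (bb x) hpS hqS hpq
      have hyIcc : y ∈ Icc (aa x) (bb x) := by
        constructor
        · linarith [hgpx.1]
        · rw [← hbbeq]; exact hgpy.2.le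
      have hD := hermD_holder hpq hE1 hE2 (⟨hgpx.1.le, hgpx.2.le⟩ : x ∈ Icc (aa x) (bb x)) hyIcc
      rw [show F' x = hermD (f (aa x)) (f (bb x)) (g (aa x)) (g (bb x)) (aa x) (bb x) x from by
          simp only [hF']; rw [if_neg hxS, if_neg (not_le.mpr hmx'), if_neg (not_le.mpr hxM')],
        show F' y = hermD (f (aa x)) (f (bb x)) (g (aa x)) (g (bb x)) (aa x) (bb x) y from by
          simp only [hF']
          rw [if_neg hyS, if_neg (not_le.mpr hmy'), if_neg (not_le.mpr hyM'), haaeq, hbbeq]]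
      refine le_trans hD ?_
      have habs : |x - y| = y - x := by
        rw [abs_sub_comm]; exact abs_of_nonneg (by linarith)
      rw [habs]
      have hkey : (bb x - aa x) ^ α * ((y - x) / (bb x - aa x)) ≤ (y - x) ^ α :=
        rpow_R3 hα hα1 (by linarith) (by linarith [hyIcc.2, hgpx.1])
      calc 8 * (2 * T₂ * (bb x - aa x) ^ α) * ((y - x) / (bb x - aa x))
          = 16 * T₂ * ((bb x - aa x) ^ α * ((y - x) / (bb x - aa x))) := by ring
        _ ≤ 16 * T₂ * (y - x) ^ α := mul_le_mul_of_nonneg_left hkey (by linarith)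
        _ ≤ 44 * T₂ * (y - x) ^ α := by
            have : (0:ℝ) ≤ (y - x) ^ α := Real.rpow_nonneg (by linarith) α
            nlinarith
  have hcore : ∀ x y, x ≤ y → |F' x - F' y| ≤ 50 * T₂ * |x - y| ^ α := by
    intro x y hxy
    have hx1 : m ≤ max (min x M) m := le_max_right _ _
    have hy1 : m ≤ max (min y M) m := le_max_right _ _
    have hx2 : max (min x M) m ≤ M := max_le (min_le_right _ _) hmM
    have hy2 : max (min y M) m ≤ M := max_le (min_le_right _ _) hmM
    have hxy' : max (min x M) m ≤ max (min y M) m :=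
      max_le_max (min_le_min_right M hxy) (le_refl m)
    have hd : max (min y M) m - max (min x M) m ≤ |x - y| := by
      have h1' : |max (min x M) m - max (min y M) m| ≤ |min x M - min y M| :=
        abs_max_sub_max_le_abs _ _ _
      have h2' : |min x M - min y M| ≤ max |x - y| |M - M| := abs_min_sub_min_le_max _ _ _ _
      rw [sub_self, abs_zero, max_eq_left (abs_nonneg _)] at h2'
      have h3' : max (min y M) m - max (min x M) m ≤ |max (min x M) m - max (min y M) m| := by
        rw [abs_sub_comm]
        exact le_abs_self _
      linarith
    have hstep := hmain (max (min x M) m) (max (min y M) m) hx1 hxy' hy2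
    rw [hclamp x, hclamp y] at hstep
    refine le_trans hstep ?_
    have hr : (max (min y M) m - max (min x M) m) ^ α ≤ |x - y| ^ α :=
      Real.rpow_le_rpow (by linarith) hd hα.le
    have h0 : (0:ℝ) ≤ |x - y| ^ α := Real.rpow_nonneg (abs_nonneg _) α
    nlinarith [mul_le_mul_of_nonneg_left hr (by linarith : (0:ℝ) ≤ 44 * T₂)]
  refine ⟨F, F', hderiv, hval, hbound, ?_⟩
  intro x y
  rcases le_total x y with h | h
  · exact hcore x y h
  · rw [abs_sub_comm (F' x), abs_sub_comm x y]
    exact hcore y x h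


open Set

/-- Whitney-type extension with `C^{1,α}` control (Corollary 2.15 of the paper). -/
theorem whitney_extension :
    ∃ C : ℝ, 0 < C ∧
      ∀ (T₁ T₂ α : ℝ) (I S : Set ℝ) (f : ℝ → ℝ),
        0 < T₁ → 0 < T₂ → 0 < α → α ≤ 1 →
        I.OrdConnected →
        EMetric.diam I ≤ ENNReal.ofReal ((T₁ / T₂) ^ (1 / α)) →
        IsClosed S → S ⊆ I →
        (∀ x ∈ S, ∀ y ∈ S, x ≠ y → |f x - f y| ≤ T₁ * |x - y|) →
        (∀ x ∈ S, ∀ y ∈ S, ∀ z ∈ S, x ≠ y → y ≠ z → x ≠ z →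
          |(f x - f y) / (x - y) - (f y - f z) / (y - z)| ≤
            T₂ * Metric.diam ({x, y, z} : Set ℝ) ^ α) →
        ∃ F F' : ℝ → ℝ,
          (∀ x ∈ I, HasDerivWithinAt F (F' x) I x) ∧
          (∀ x ∈ S, F x = f x) ∧
          (∀ x ∈ I, |F' x| ≤ C * T₁) ∧
          (∀ x ∈ I, ∀ y ∈ I, |F' x - F' y| ≤ C * T₂ * |x - y| ^ α) := by
  refine ⟨50, by norm_num, ?_⟩
  intro T₁ T₂ α I S f hT₁ hT₂ hα hα1 hIoc hIdiam hScl hSI hf1 hf2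
  rcases Set.eq_empty_or_nonempty S with rfl | hne
  · refine ⟨fun _ => 0, fun _ => 0, fun x _ => (hasDerivAt_const x 0).hasDerivWithinAt,
      fun x hx => absurd hx (notMem_empty x), fun x _ => ?_, fun x _ y _ => ?_⟩
    · simp only [abs_zero]
      positivity
    · simp only [sub_zero, abs_zero]
      positivity
  · obtain ⟨g, hg1, hA, hg2⟩ := exists_g T₁ T₂ α S f hT₁ hT₂ hα hα1 hScl hf1 hf2
    have hIbdd : Bornology.IsBounded I := by
      rw [Metric.isBounded_iff_ediam_ne_top]
      exact ne_top_of_le_ne_top ENNReal.ofReal_ne_top hIdiam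
    have hSbdd := (hIbdd.subset hSI)
    rw [isBounded_iff_bddBelow_bddAbove] at hSbdd
    have hsize : ∀ s ∈ S, ∀ t ∈ S, T₂ * |s - t| ^ α ≤ T₁ := by
      intro s hs t ht
      have hd : dist s t ≤ (T₁ / T₂) ^ (1 / α) := by
        have h1' : edist s t ≤ EMetric.diam I := EMetric.edist_le_diam_of_mem (hSI hs) (hSI ht)
        have h2' := le_trans h1' hIdiam
        rw [edist_dist] at h2'
        exact (ENNReal.ofReal_le_ofReal_iff (Real.rpow_nonneg (by positivity) _)).mp h2'
      rw [Real.dist_eq] at hd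
      have h3' : |s - t| ^ α ≤ ((T₁ / T₂) ^ (1 / α)) ^ α :=
        Real.rpow_le_rpow (abs_nonneg _) hd hα.le
      rw [← Real.rpow_mul (by positivity), one_div, inv_mul_cancel₀ hα.ne', Real.rpow_one] at h3'
      calc T₂ * |s - t| ^ α ≤ T₂ * (T₁ / T₂) := mul_le_mul_of_nonneg_left h3' hT₂.le
        _ = T₁ := by field_simp
    obtain ⟨F, F', hder, hval, hbd, hhol⟩ := main_ext T₁ T₂ α S f g hT₁ hT₂ hα hα1 hScl hne
      hSbdd.1 hSbdd.2 hsize hg1 hA hg2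
    exact ⟨F, F', fun x _ => (hder x).hasDerivWithinAt, hval, fun x _ => hbd x,
      fun x _ y _ => hhol x y⟩
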